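/- In a free group, if x^n = y^n for some nonzero integer n, then x = y. -/

import Mathlib

namespace StmtSeven
open List FreeGroup

variable {α : Type*}

/-- Non-cancelling adjacency of letters in a free-group word. -/
def NR (p q : α × Bool) : Prop := ¬(p.1 = q.1 ∧ p.2 = !q.2)

/-- Cyclic boundary condition: the last letter does not cancel the first. -/
def Bd (a : List (α × Bool)) : Prop := ∀ p ∈ a.getLast?, ∀ q ∈ a.head?, NR p q

/-- `n`-fold concatenation of a word. -/
def F (n : ℕ) (a : List (α × Bool)) : List (α × Bool) := (List.replicate n a).flatten

lemma not_nr {p q : α × Bool} (h : ¬ NR p q) : q = (p.1, !p.2) := by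
  rw [NR, not_not] at h
  rcases h with ⟨h1, h2⟩
  rcases q with ⟨c, d⟩; rcases p with ⟨a, b⟩
  simp only at h1 h2
  subst h1
  cases b <;> cases d <;> simp_all

lemma reduce_eq_self [DecidableEq α] {L : List (α × Bool)} (h : List.Chain' NR L) :
    FreeGroup.reduce L = L := by
  induction L with
  | nil => rfl
  | cons x L ih =>
    rw [FreeGroup.reduce.cons, ih h.tail]
    cases L with
    | nil => rfl
    | cons hd tl =>
      have hx : NR x hd := (List.isChain_cons_cons.mp h).1
      simp only
      rw [if_neg hx]

lemma chain'_of_reduce [DecidableEq α] {L : List (α × Bool)} (h : FreeGroup.reduce L = L) :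
    List.Chain' NR L := by
  induction L with
  | nil => exact List.isChain_nil
  | cons x L ih =>
    have hlen : (FreeGroup.reduce L).length ≤ L.length :=
      FreeGroup.Red.length_le (FreeGroup.reduce.red)
    rw [FreeGroup.reduce.cons] at h
    rcases hL : FreeGroup.reduce L with - | ⟨hd, tl⟩
    · rw [hL] at h
      have h' : [x] = x :: L := h
      have : L = [] := by injection h' with _ h2; exact h2.symm
      rw [this]; exact List.isChain_singleton x
    · rw [hL] at h hlen
      have h' : (if x.1 = hd.1 ∧ x.2 = !hd.2 then tl else x :: hd :: tl) = x :: L := h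
      by_cases hc : x.1 = hd.1 ∧ x.2 = !hd.2
      · rw [if_pos hc] at h'
        exfalso
        have : tl.length = L.length + 1 := by rw [h']; simp
        simp at hlen; omega
      · rw [if_neg hc] at h'
        have hL' : L = hd :: tl := by injection h' with _ h2; exact h2.symm
        rw [hL']
        refine List.isChain_cons_cons.mpr ⟨hc, ?_⟩
        rw [← hL']
        exact ih (by rw [hL, hL'])

lemma chain'_toWord [DecidableEq α] (x : FreeGroup α) : List.Chain' NR x.toWord :=
  chain'_of_reduce (FreeGroup.reduce_toWord x)

lemma toWord_mk_eq [DecidableEq α] {L : List (α × Bool)} (h : List.Chain' NR L) :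
    (FreeGroup.mk L).toWord = L := by
  rw [FreeGroup.toWord_mk, reduce_eq_self h]

lemma invRev_append (u v : List (α × Bool)) :
    FreeGroup.invRev (u ++ v) = FreeGroup.invRev v ++ FreeGroup.invRev u := by
  simp [FreeGroup.invRev]

lemma invRev_cons (x : α × Bool) (c : List (α × Bool)) :
    FreeGroup.invRev (x :: c) = FreeGroup.invRev c ++ [(x.1, !x.2)] := by
  simp [FreeGroup.invRev]

lemma getLast?_invRev_cons (x : α × Bool) (c : List (α × Bool)) :
    (FreeGroup.invRev (x :: c)).getLast? = some (x.1, !x.2) := by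
  rw [invRev_cons]; simp

lemma F_zero (a : List (α × Bool)) : F 0 a = [] := rfl

lemma F_succ (n : ℕ) (a : List (α × Bool)) : F (n + 1) a = a ++ F n a := by
  simp [F, List.replicate_succ]

lemma F_succ' (n : ℕ) (a : List (α × Bool)) : F (n + 1) a = F n a ++ a := by
  induction n with
  | zero => simp [F]
  | succ n ih => rw [F_succ (n+1), ih, ← List.append_assoc, ← F_succ, ih]

lemma F_length (n : ℕ) (a : List (α × Bool)) : (F n a).length = n * a.length := by
  simp [F, List.length_flatten]

lemma head?_F (n : ℕ) (a : List (α × Bool)) : (F (n + 1) a).head? = a.head? := by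
  rcases eq_or_ne a [] with rfl | ha
  · simp [F]
  · rw [F_succ, List.head?_append_of_ne_nil _ ha]

lemma getLast?_F (n : ℕ) (a : List (α × Bool)) : (F (n + 1) a).getLast? = a.getLast? := by
  rcases eq_or_ne a [] with rfl | ha
  · simp [F]
  · rw [F_succ', List.getLast?_append_of_ne_nil _ ha]

lemma chain'_F {a : List (α × Bool)} (h : List.Chain' NR a) (hbd : Bd a) (n : ℕ) :
    List.Chain' NR (F n a) := by
  induction n with
  | zero => simp [F, List.Chain']
  | succ n ih =>
    rw [F_succ, List.Chain', List.isChain_append]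
    refine ⟨h, ih, ?_⟩
    intro p hp q hq
    cases n with
    | zero => simp [F] at hq
    | succ n => rw [head?_F] at hq; exact hbd p hp q hq

lemma bd_F {a : List (α × Bool)} (hbd : Bd a) (n : ℕ) : Bd (F n a) := by
  cases n with
  | zero => intro p hp; simp [F] at hp
  | succ n =>
    intro p hp q hq
    rw [getLast?_F] at hp; rw [head?_F] at hq
    exact hbd p hp q hq

lemma decomp : ∀ (N : ℕ) (w : List (α × Bool)), w.length ≤ N →
    ∃ c a, w = c ++ a ++ FreeGroup.invRev c ∧ Bd a := by
  intro N
  induction N with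
  | zero =>
    intro w hw
    have : w = [] := List.eq_nil_of_length_eq_zero (Nat.le_zero.mp hw)
    subst this
    exact ⟨[], [], by simp [FreeGroup.invRev], by intro p hp; simp at hp⟩
  | succ N ih =>
    intro w hw
    by_cases hbd : Bd w
    · exact ⟨[], w, by simp [FreeGroup.invRev], hbd⟩
    · rcases w with - | ⟨x, t⟩
      · exact absurd (by intro p hp; simp at hp) hbd
      · rw [Bd] at hbd
        push_neg at hbd
        obtain ⟨p, hp, q, hq, hnr⟩ := hbd
        have hqx : x = q := by simpa using hq
        subst hqx
        have hpx : x = (p.1, !p.2) := not_nr hnr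
        have ht : t ≠ [] := by
          rintro rfl
          have hppx : x = p := by simpa using hp
          rw [hppx] at hpx
          have := congrArg Prod.snd hpx
          simp at this
        have h2 : (x :: t).getLast? = t.getLast? := by
          rcases t with - | ⟨u, s⟩
          · exact absurd rfl ht
          · exact List.getLast?_cons_cons ..
        rw [h2, List.getLast?_eq_getLast ht] at hp
        have hplast : t.getLast ht = p := by simpa using hp
        have hsplit : t = t.dropLast ++ [p] := by
          conv_lhs => rw [← List.dropLast_append_getLast ht]
          rw [hplast]
        have hlen : t.dropLast.length ≤ N := by
          have h3 := List.length_dropLast (xs := t)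
          simp at hw
          omega
        obtain ⟨c', a, hm, hbda⟩ := ih t.dropLast hlen
        refine ⟨x :: c', a, ?_, hbda⟩
        rw [invRev_cons]
        have hxp : (x.1, !x.2) = p := by rw [hpx]; simp
        rw [hxp]
        conv_lhs => rw [hsplit, hm]
        simp [List.append_assoc]

/-- Conjugation by `c` of a power of a cyclically reduced word stays reduced. -/
lemma conj_chain {c a : List (α × Bool)}
    (h : List.Chain' NR (c ++ a ++ FreeGroup.invRev c)) (hbd : Bd a) (n : ℕ) :
    List.Chain' NR (c ++ F (n + 1) a ++ FreeGroup.invRev c) := by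
  rcases eq_or_ne a [] with rfl | ha
  · have : F (n + 1) ([] : List (α × Bool)) = [] := by simp [F]
    rw [this]; simpa using h
  · rw [List.append_assoc, List.Chain', List.isChain_append] at h ⊢
    obtain ⟨h1, h2, h3⟩ := h
    rw [List.isChain_append] at h2
    obtain ⟨h4, h5, h6⟩ := h2
    have hFne : F (n + 1) a ≠ [] := by
      intro hF
      have h0 := congrArg List.length hF
      rw [F_length] at h0
      simp only [List.length_nil] at h0
      have h1 : a.length = 0 := by
        rcases Nat.mul_eq_zero.mp h0 with h' | h'
        · omega
        · exact h'
      exact ha (List.eq_nil_of_length_eq_zero h1)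
    refine ⟨h1, ?_, ?_⟩
    · rw [List.isChain_append]
      refine ⟨chain'_F h4 hbd (n + 1), h5, ?_⟩
      intro p hp q hq
      rw [getLast?_F] at hp
      exact h6 p hp q hq
    · intro p hp q hq
      rw [List.head?_append_of_ne_nil _ hFne, head?_F] at hq
      apply h3 p hp
      rw [List.head?_append_of_ne_nil _ ha]
      exact hq

lemma pow_word [DecidableEq α] (x : FreeGroup α) {c a : List (α × Bool)}
    (hw : x.toWord = c ++ a ++ FreeGroup.invRev c) (hbd : Bd a) (n : ℕ) :
    (x ^ (n + 1)).toWord = c ++ F (n + 1) a ++ FreeGroup.invRev c := by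
  have hch : List.Chain' NR (c ++ a ++ FreeGroup.invRev c) := hw ▸ chain'_toWord x
  have hx : x = FreeGroup.mk (c ++ a ++ FreeGroup.invRev c) := by
    rw [← hw, FreeGroup.mk_toWord]
  have hx' : x = FreeGroup.mk c * FreeGroup.mk a * (FreeGroup.mk c)⁻¹ := by
    rw [FreeGroup.inv_mk, FreeGroup.mul_mk, FreeGroup.mul_mk, ← hx]
  have hpow : x ^ (n + 1) =
      FreeGroup.mk c * (FreeGroup.mk a) ^ (n + 1) * (FreeGroup.mk c)⁻¹ := by
    rw [hx', conj_pow]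
  have hpow' : x ^ (n + 1) = FreeGroup.mk (c ++ F (n + 1) a ++ FreeGroup.invRev c) := by
    rw [hpow, FreeGroup.pow_mk, FreeGroup.inv_mk, FreeGroup.mul_mk, FreeGroup.mul_mk]
    rfl
  rw [hpow', toWord_mk_eq (conj_chain hch hbd n)]

/-- Key cancellation: equal conjugated cyclically-reduced words have equal pieces. -/
lemma words_eq {c d A B : List (α × Bool)} (hA : Bd A) (hc : c.length ≤ d.length)
    (E : c ++ A ++ FreeGroup.invRev c = d ++ B ++ FreeGroup.invRev d) : c = d ∧ A = B := by
  have hpre : c <+: d :=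
    List.prefix_of_prefix_length_le
      ⟨A ++ FreeGroup.invRev c, by rw [← List.append_assoc, E]⟩
      ⟨B ++ FreeGroup.invRev d, by rw [← List.append_assoc]⟩ hc
  obtain ⟨e, rfl⟩ := hpre
  rw [invRev_append] at E
  have E2 : A ++ FreeGroup.invRev c =
      (e ++ B ++ FreeGroup.invRev e) ++ FreeGroup.invRev c := by
    apply List.append_cancel_left (as := c)
    simpa [List.append_assoc] using E
  have E3 : A = e ++ B ++ FreeGroup.invRev e := List.append_cancel_right E2
  rcases e with - | ⟨p, e'⟩
  · refine ⟨by simp, ?_⟩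
    rw [E3]; simp [FreeGroup.invRev]
  · exfalso
    have h1 : A.head? = some p := by rw [E3]; simp
    have h2 : A.getLast? = some (p.1, !p.2) := by
      rw [E3, List.getLast?_append_of_ne_nil, getLast?_invRev_cons]
      simp [FreeGroup.invRev]
    have := hA (p.1, !p.2) (by rw [h2]; rfl) p (by rw [h1]; rfl)
    exact this ⟨rfl, rfl⟩

lemma main_nat [DecidableEq α] (x y : FreeGroup α) (n : ℕ)
    (h : x ^ (n + 1) = y ^ (n + 1)) : x = y := by
  obtain ⟨c, a, hxw, hba⟩ := decomp x.toWord.length x.toWord le_rfl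
  obtain ⟨d, b, hyw, hbb⟩ := decomp y.toWord.length y.toWord le_rfl
  have Wx := pow_word x hxw hba n
  have Wy := pow_word y hyw hbb n
  have E : c ++ F (n + 1) a ++ FreeGroup.invRev c
      = d ++ F (n + 1) b ++ FreeGroup.invRev d := by
    rw [← Wx, ← Wy, h]
  have habl : ∀ (c d A B : List (α × Bool)), c = d → F (n+1) A = F (n+1) B → A = B := by
    intro c d A B _ hF
    have hlen : A.length = B.length := by
      have := congrArg List.length hF
      rw [F_length, F_length] at this
      exact Nat.eq_of_mul_eq_mul_left (Nat.succ_pos n) this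
    have : A ++ F n A = B ++ F n B := by rw [← F_succ, ← F_succ, hF]
    exact (List.append_inj this hlen).1
  have key : c = d ∧ F (n + 1) a = F (n + 1) b := by
    rcases le_total c.length d.length with hle | hle
    · exact words_eq (bd_F hba (n + 1)) hle E
    · obtain ⟨h1, h2⟩ := words_eq (bd_F hbb (n + 1)) hle E.symm
      exact ⟨h1.symm, h2.symm⟩
  obtain ⟨hcd, hab⟩ := key
  have hab' : a = b := habl c d a b hcd hab
  have : x.toWord = y.toWord := by rw [hxw, hyw, hcd, hab']
  exact FreeGroup.toWord_injective this

end StmtSeven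

theorem stmt_7 (α : Type*) (x y : FreeGroup α) (n : ℤ) (hn : n ≠ 0)
    (h : x ^ n = y ^ n) : x = y := by
  classical
  rcases lt_or_gt_of_ne hn with hneg | hpos
  · have hm : ∃ m : ℕ, -n = (m : ℤ) + 1 := ⟨(-n).toNat - 1, by omega⟩
    obtain ⟨m, hm⟩ := hm
    have h' : (x⁻¹) ^ (m + 1) = (y⁻¹) ^ (m + 1) := by
      have : x ^ (-n) = y ^ (-n) := by rw [zpow_neg, zpow_neg, h]
      rw [hm] at this
      have hx : x ^ ((m : ℤ) + 1) = x ^ (m + 1 : ℕ) := by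
        rw [← zpow_natCast]; norm_num
      have hy : y ^ ((m : ℤ) + 1) = y ^ (m + 1 : ℕ) := by
        rw [← zpow_natCast]; norm_num
      rw [hx, hy] at this
      rw [inv_pow, inv_pow, this]
    have := StmtSeven.main_nat x⁻¹ y⁻¹ m h'
    exact inv_injective this
  · have hm : ∃ m : ℕ, n = (m : ℤ) + 1 := ⟨n.toNat - 1, by omega⟩
    obtain ⟨m, hm⟩ := hm
    have h' : x ^ (m + 1) = y ^ (m + 1) := by
      rw [hm] at h
      have hx : x ^ ((m : ℤ) + 1) = x ^ (m + 1 : ℕ) := by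
        rw [← zpow_natCast]; norm_num
      have hy : y ^ ((m : ℤ) + 1) = y ^ (m + 1 : ℕ) := by
        rw [← zpow_natCast]; norm_num
      rw [hx, hy] at h
      exact h
    exact StmtSeven.main_nat x y m h'
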